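/- Let n ≥ 2 and let S_n(Sym_n) be the monoid presented by generators x_1,…,x_n and relations x_{σ(1)}x_{σ(2)}⋯x_{σ(n)} = x_1x_2⋯x_n for all σ ∈ Sym_n. Then for all i, j with 2 ≤ i, j ≤ n, the identity x_ε·x_i·x_j = x_ε·x_j·x_i holds in S_n(Sym_n), where x_ε = x_1x_2⋯x_n. -/

import Mathlib

/-- The word `x_{σ(1)} x_{σ(2)} ⋯ x_{σ(n)}` in the free monoid on `n` generators
(generator `x_j` is indexed by `j-1 : Fin n`). -/
def permWord {n : ℕ} (σ : Equiv.Perm (Fin n)) : FreeMonoid (Fin n) :=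
  FreeMonoid.ofList (List.ofFn fun i => σ i)

/-- The word `x_ε = x_1 x_2 ⋯ x_n`. -/
def epsWord (n : ℕ) : FreeMonoid (Fin n) :=
  FreeMonoid.ofList (List.ofFn fun i : Fin n => i)

/-- The defining relations `x_{σ(1)} ⋯ x_{σ(n)} = x_1 ⋯ x_n`, `σ ∈ Sym_n`. -/
def symRel (n : ℕ) : FreeMonoid (Fin n) → FreeMonoid (Fin n) → Prop :=
  fun a b => ∃ σ : Equiv.Perm (Fin n), a = permWord σ ∧ b = epsWord n

/-- The canonical projection from the free monoid onto `S_n(Sym_n)`. -/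
def proj (n : ℕ) : FreeMonoid (Fin n) →* PresentedMonoid (symRel n) :=
  PresentedMonoid.mk (symRel n)

/-- `u` contains a subword of the form `x_{σ(1)} ⋯ x_{σ(n)}` for some `σ ∈ Sym_n`. -/
def HasPermSubword {n : ℕ} (u : FreeMonoid (Fin n)) : Prop :=
  ∃ (σ : Equiv.Perm (Fin n)) (a b : FreeMonoid (Fin n)), u = a * permWord σ * b

/-- The word `x_1^{m_1} · x_ε · x_2^{m_2} ⋯ x_n^{m_n}` (0-indexed: `m i` is the
exponent of generator `i`). -/
def normalWord (n : ℕ) (h : 0 < n) (m : Fin n → ℕ) : FreeMonoid (Fin n) :=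
  FreeMonoid.ofList (List.replicate (m ⟨0, h⟩) ⟨0, h⟩) * epsWord n *
    FreeMonoid.ofList (((List.finRange n).drop 1).flatMap fun i => List.replicate (m i) i)

lemma proj_perm {n : ℕ} (σ : Equiv.Perm (Fin n)) :
    proj n (permWord σ) = proj n (epsWord n) :=
  Quotient.sound (ConGen.Rel.of _ _ ⟨σ, rfl, rfl⟩)

lemma proj_list {n : ℕ} (l : List (Fin n)) (hnd : l.Nodup) (hl : l.length = n) :
    proj n (FreeMonoid.ofList l) = proj n (epsWord n) := by
  have hinj : Function.Injective (fun k : Fin n => l.get (Fin.cast hl.symm k)) := by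
    intro a b hab
    have := (List.Nodup.get_inj_iff hnd).mp hab
    simpa [Fin.ext_iff] using this
  let σ : Equiv.Perm (Fin n) := Equiv.ofBijective _ (Finite.injective_iff_bijective.mp hinj)
  have hw : permWord σ = FreeMonoid.ofList l := by
    unfold permWord
    congr 1
    apply List.ext_getElem
    · simp [hl]
    · intro k h1 h2
      simp [σ, Equiv.ofBijective, List.get]
  rw [← hw, proj_perm]

lemma eps_comm {n : ℕ} (i : Fin n) :
    proj n (epsWord n) * proj n (FreeMonoid.of i) =
      proj n (FreeMonoid.of i) * proj n (epsWord n) := by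
  set rest := (List.finRange n).erase i with hrest
  have hndR : rest.Nodup := (List.nodup_finRange n).erase i
  have hiR : i ∉ rest := (List.nodup_finRange n).not_mem_erase
  have hlenR : rest.length = n - 1 := by
    rw [hrest, List.length_erase_of_mem (List.mem_finRange i), List.length_finRange]
  have hpos : 0 < n := i.pos
  have h1 : proj n (FreeMonoid.ofList (i :: rest)) = proj n (epsWord n) :=
    proj_list _ (List.nodup_cons.mpr ⟨hiR, hndR⟩) (by simp [hlenR]; omega)
  have h2 : proj n (FreeMonoid.ofList (rest ++ [i])) = proj n (epsWord n) :=
    proj_list _ (by simp [List.nodup_append, hndR, hiR]; intro a ha h; exact hiR (h ▸ ha)) (by simp [hlenR]; omega)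
  calc proj n (epsWord n) * proj n (FreeMonoid.of i)
      = proj n (FreeMonoid.ofList (i :: rest) * FreeMonoid.of i) := by rw [map_mul, h1]
    _ = proj n (FreeMonoid.of i * FreeMonoid.ofList (rest ++ [i])) := by
        congr 1
    _ = proj n (FreeMonoid.of i) * proj n (epsWord n) := by rw [map_mul, h2]

/-- For all `i, j` with `2 ≤ i, j ≤ n` (0-indexed: values ≠ 0),
`x_ε · x_i · x_j = x_ε · x_j · x_i` holds in `S_n(Sym_n)`. -/
theorem eps_mul_swap (n : ℕ) (hn : 2 ≤ n) (i j : Fin n)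
    (hi : i.val ≠ 0) (hj : j.val ≠ 0) :
    proj n (epsWord n) * proj n (FreeMonoid.of i) * proj n (FreeMonoid.of j) =
      proj n (epsWord n) * proj n (FreeMonoid.of j) * proj n (FreeMonoid.of i) := by
  rcases eq_or_ne i j with rfl | hij
  · rfl
  have hpos : 0 < n := by omega
  set z : Fin n := ⟨0, hpos⟩ with hz
  have hiz : i ≠ z := by simp [hz, Fin.ext_iff, hi]
  have hjz : j ≠ z := by simp [hz, Fin.ext_iff, hj]
  set w := (((List.finRange n).erase z).erase i).erase j with hw
  have hnd0 := List.nodup_finRange n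
  have hnd1 : ((List.finRange n).erase z).Nodup := hnd0.erase z
  have hnd2 := hnd1.erase i
  have hndw : w.Nodup := hnd2.erase j
  -- memberships
  have hmi : i ∈ (List.finRange n).erase z :=
    (List.mem_erase_of_ne hiz).mpr (List.mem_finRange i)
  have hmj : j ∈ ((List.finRange n).erase z).erase i :=
    (List.mem_erase_of_ne hij.symm).mpr ((List.mem_erase_of_ne hjz).mpr (List.mem_finRange j))
  -- non-memberships in w
  have hzw : z ∉ w := fun h => hnd0.not_mem_erase
    (List.mem_of_mem_erase (List.mem_of_mem_erase h))
  have hiw : i ∉ w := fun h => hnd1.not_mem_erase (List.mem_of_mem_erase h)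
  have hjw : j ∉ w := fun h => hnd2.not_mem_erase h
  -- n ≥ 3
  have h3n : 3 ≤ n := by
    have hcard : ({i, j, z} : Finset (Fin n)).card = 3 := by
      rw [Finset.card_insert_of_notMem (by simp [hij, hiz]),
        Finset.card_insert_of_notMem (by simp [hjz]), Finset.card_singleton]
    have := Finset.card_le_univ ({i, j, z} : Finset (Fin n))
    simpa [hcard] using this
  have hlenw : w.length = n - 3 := by
    rw [hw, List.length_erase_of_mem hmj, List.length_erase_of_mem hmi,
      List.length_erase_of_mem (List.mem_finRange z), List.length_finRange]
    omega
  have hL2 : proj n (FreeMonoid.ofList (i :: j :: z :: w)) = proj n (epsWord n) :=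
    proj_list _ (by simp [List.nodup_cons, hndw, hiw, hjw, hzw, hij, hiz, hjz])
      (by simp [hlenw]; omega)
  have hL3 : proj n (FreeMonoid.ofList (z :: (w ++ [j, i]))) = proj n (epsWord n) :=
    proj_list _ (by
        refine List.nodup_cons.mpr ⟨?_, ?_⟩
        · simp [hzw, hiz.symm, hjz.symm]
        · refine (List.nodup_append).mpr ⟨hndw, ?_, ?_⟩
          · simp [Ne.symm hij]
          · intro a ha; simp only [List.mem_cons, List.mem_singleton] at *
            intro b hb hab; subst hab
            rcases hb with rfl | rfl | h
            exacts [hjw ha, hiw ha, by simp at h])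
      (by simp [hlenw]; omega)
  have key : proj n (FreeMonoid.of i) * proj n (FreeMonoid.of j) * proj n (epsWord n) =
      proj n (epsWord n) * proj n (FreeMonoid.of j) * proj n (FreeMonoid.of i) := by
    calc proj n (FreeMonoid.of i) * proj n (FreeMonoid.of j) * proj n (epsWord n)
        = proj n (FreeMonoid.of i * FreeMonoid.of j *
            FreeMonoid.ofList (z :: (w ++ [j, i]))) := by rw [map_mul, map_mul, hL3]
      _ = proj n (FreeMonoid.ofList (i :: j :: z :: w) * FreeMonoid.of j *
            FreeMonoid.of i) := by
          congr 1
          show FreeMonoid.ofList ([i] ++ ([j] ++ (z :: (w ++ [j, i])))) =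
            FreeMonoid.ofList ((i :: j :: z :: w) ++ [j] ++ [i])
          congr 1
          simp
      _ = proj n (epsWord n) * proj n (FreeMonoid.of j) * proj n (FreeMonoid.of i) := by
          rw [map_mul, map_mul, hL2]
  calc proj n (epsWord n) * proj n (FreeMonoid.of i) * proj n (FreeMonoid.of j)
      = proj n (FreeMonoid.of i) * proj n (epsWord n) * proj n (FreeMonoid.of j) := by
        rw [eps_comm]
    _ = proj n (FreeMonoid.of i) * (proj n (FreeMonoid.of j) * proj n (epsWord n)) := by
        rw [mul_assoc, eps_comm]
    _ = proj n (FreeMonoid.of i) * proj n (FreeMonoid.of j) * proj n (epsWord n) := by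
        rw [mul_assoc]
    _ = proj n (epsWord n) * proj n (FreeMonoid.of j) * proj n (FreeMonoid.of i) := key
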